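/- arXiv:2407.03609 — 2 statements merged into one kernel-verified Lean document; each statement's English description precedes it below -/
import Mathlib

section
/- The number of monic irreducible polynomials of degree n over the field GF(2) is at least 2^(n-1)/n for every positive integer n. -/
open Polynomial Finset

private lemma aux_pow_two_pow {F : Type*} [Field F] [Finite F] [Algebra (ZMod 2) F]
    (α : F) : α ^ 2 ^ (minpoly (ZMod 2) α).natDegree = α := by
  have hint : IsIntegral (ZMod 2) α := IsIntegral.of_finite _ _
  set E := IntermediateField.adjoin (ZMod 2) {α} with hE
  have hαE : α ∈ E := IntermediateField.mem_adjoin_simple_self _ α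
  haveI : Fintype E := Fintype.ofFinite E
  have hfr : Module.finrank (ZMod 2) E = (minpoly (ZMod 2) α).natDegree :=
    IntermediateField.adjoin.finrank hint
  have hcard : Fintype.card E = 2 ^ (minpoly (ZMod 2) α).natDegree := by
    rw [Module.card_eq_pow_finrank (K := ZMod 2) (V := E), ZMod.card, hfr]
  have h := FiniteField.pow_card (⟨α, hαE⟩ : E)
  rw [hcard] at h
  have h2 := congrArg (Subtype.val) h
  push_cast at h2
  simpa using h2

private lemma aux_geom_sum (m : ℕ) : ∑ d ∈ Finset.Ioc 0 m, 2 ^ d = 2 ^ (m + 1) - 2 := by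
  induction m with
  | zero => simp
  | succ k ih =>
    rw [Finset.sum_Ioc_succ_top (Nat.zero_le _), ih]
    have h1 : 2 ≤ 2 ^ (k + 1) := Nat.one_lt_two_pow_iff.2 (Nat.succ_ne_zero k)
    have h2 : (2 : ℕ) ^ (k + 1 + 1) = 2 * 2 ^ (k + 1) := by ring
    omega

private lemma aux_finite (n : ℕ) :
    Finite {p : Polynomial (ZMod 2) // p.Monic ∧ p.natDegree = n ∧ Irreducible p} := by
  have : Function.Injective
      (fun p : {p : Polynomial (ZMod 2) // p.Monic ∧ p.natDegree = n ∧ Irreducible p} =>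
        (fun i : Fin (n + 1) => (p : Polynomial (ZMod 2)).coeff i)) := by
    rintro ⟨p, hp⟩ ⟨q, hq⟩ h
    simp only [Subtype.mk.injEq]
    ext i
    rcases Nat.lt_or_ge i (n + 1) with hi | hi
    · exact congrFun h ⟨i, hi⟩
    · rw [Polynomial.coeff_eq_zero_of_natDegree_lt (by omega : p.natDegree < i),
        Polynomial.coeff_eq_zero_of_natDegree_lt (by omega : q.natDegree < i)]
  exact Finite.of_injective _ this

/-- The number of (monic) irreducible polynomials of exact degree `n`
over `GF(2)` is at least `2^(n-1)/n` for every positive integer `n`. -/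
theorem card_irreducible_polys_GF2_ge (n : ℕ) (hn : 0 < n) :
    (2 : ℝ) ^ (n - 1) / n ≤
      Nat.card {p : Polynomial (ZMod 2) // p.Monic ∧ p.natDegree = n ∧ Irreducible p} := by
  classical
  haveI := aux_finite n
  set F := GaloisField 2 n with hF
  haveI : Fintype F := Fintype.ofFinite F
  have hintegral : ∀ α : F, IsIntegral (ZMod 2) α := fun α => IsIntegral.of_finite _ _
  have hcardF : Fintype.card F = 2 ^ n := by
    rw [← Nat.card_eq_fintype_card, GaloisField.card 2 n hn.ne']
  have hfinrank : Module.finrank (ZMod 2) F = n := GaloisField.finrank 2 hn.ne'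
  set G : Finset F := univ.filter (fun α => (minpoly (ZMod 2) α).natDegree = n) with hG
  set Bad : Finset F := univ.filter (fun α => ¬ (minpoly (ZMod 2) α).natDegree = n) with hBad
  -- Bad is contained in a union of root sets
  have hBadsub : Bad ⊆ (n.properDivisors).biUnion
      (fun d => ((X ^ 2 ^ d - X : F[X]).roots).toFinset) := by
    intro α hα
    rw [hBad, mem_filter] at hα
    set d := (minpoly (ZMod 2) α).natDegree with hd
    have hdvd : d ∣ n := by
      have := minpoly.degree_dvd (hintegral α)
      rwa [hfinrank] at this
    have hdpos : 0 < d := minpoly.natDegree_pos (hintegral α)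
    rw [mem_biUnion]
    refine ⟨d, Nat.mem_properDivisors.2 ⟨hdvd, lt_of_le_of_ne (Nat.le_of_dvd hn hdvd) hα.2⟩, ?_⟩
    rw [Multiset.mem_toFinset, mem_roots
      (FiniteField.X_pow_card_pow_sub_X_ne_zero F hdpos.ne' one_lt_two)]
    simp [Polynomial.IsRoot, hd, aux_pow_two_pow α]
  have hBadcard : Bad.card ≤ 2 ^ (n / 2 + 1) - 2 := by
    calc Bad.card ≤ ∑ d ∈ n.properDivisors, ((X ^ 2 ^ d - X : F[X]).roots).toFinset.card :=
          (card_le_card hBadsub).trans card_biUnion_le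
      _ ≤ ∑ d ∈ n.properDivisors, 2 ^ d := by
          refine Finset.sum_le_sum fun d hd => ?_
          have hd0 : d ≠ 0 := (Nat.pos_of_mem_properDivisors hd).ne'
          calc ((X ^ 2 ^ d - X : F[X]).roots).toFinset.card
              ≤ ((X ^ 2 ^ d - X : F[X]).roots).card := Multiset.toFinset_card_le _
            _ ≤ (X ^ 2 ^ d - X : F[X]).natDegree := card_roots' _
            _ = 2 ^ d := FiniteField.X_pow_card_pow_sub_X_natDegree_eq F hd0 one_lt_two
      _ ≤ ∑ d ∈ Finset.Ioc 0 (n / 2), 2 ^ d := by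
          refine Finset.sum_le_sum_of_subset fun d hd => ?_
          have h1 := Nat.pos_of_mem_properDivisors hd
          rcases (Nat.mem_properDivisors.1 hd).1 with ⟨k, hk⟩
          have hlt := (Nat.mem_properDivisors.1 hd).2
          have hk2 : 2 ≤ k := by
            rcases Nat.lt_or_ge k 2 with h | h
            · interval_cases k <;> omega
            · exact h
          have h2 : d ≤ n / 2 := Nat.le_div_iff_mul_le (by norm_num) |>.2
            (by calc d * 2 ≤ d * k := Nat.mul_le_mul_left d hk2
                  _ = n := hk.symm)
          exact Finset.mem_Ioc.2 ⟨h1, h2⟩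
      _ = 2 ^ (n / 2 + 1) - 2 := aux_geom_sum (n / 2)
  -- card of G
  have hsplit : G.card + Bad.card = 2 ^ n := by
    rw [hG, hBad, Finset.card_filter_add_card_filter_not, card_univ, hcardF]
  have hGcard : 2 ^ (n - 1) ≤ G.card := by
    have hkey : 2 ^ (n / 2 + 1) ≤ 2 ^ (n - 1) + 2 := by
      rcases Nat.lt_or_ge n 3 with h | h
      · have h12 : n = 1 ∨ n = 2 := by omega
        rcases h12 with h1 | h1 <;> rw [h1] <;> norm_num
      · have : n / 2 + 1 ≤ n - 1 := by omega
        calc (2:ℕ) ^ (n / 2 + 1) ≤ 2 ^ (n - 1) := Nat.pow_le_pow_right (by norm_num) this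
          _ ≤ 2 ^ (n - 1) + 2 := Nat.le_add_right _ _
    have h2n : (2:ℕ) ^ n = 2 * 2 ^ (n - 1) := by
      rw [← pow_succ']
      congr 1
      omega
    omega
  -- the image of G under minpoly
  set T : Finset (Polynomial (ZMod 2)) := G.image (fun α => minpoly (ZMod 2) α) with hT
  have hGT : G.card ≤ n * T.card := by
    refine Finset.card_le_mul_card_image G n fun p hp => ?_
    rcases Finset.mem_image.1 hp with ⟨β, hβ, hβp⟩
    rw [hG, mem_filter] at hβ
    have hpne : p ≠ 0 := hβp ▸ minpoly.ne_zero (hintegral β)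
    have hpdeg : p.natDegree = n := by rw [← hβp]; exact hβ.2
    have hmapne : p.map (algebraMap (ZMod 2) F) ≠ 0 := by
      rw [Polynomial.map_ne_zero_iff (algebraMap (ZMod 2) F).injective]
      exact hpne
    calc (G.filter (fun α => minpoly (ZMod 2) α = p)).card
        ≤ ((p.map (algebraMap (ZMod 2) F)).roots).toFinset.card := by
          refine Finset.card_le_card fun α hα => ?_
          rw [mem_filter] at hα
          rw [Multiset.mem_toFinset, mem_roots hmapne]
          have := minpoly.aeval (ZMod 2) α
          rw [hα.2] at this
          rwa [Polynomial.aeval_def, ← Polynomial.eval_map] at this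
      _ ≤ ((p.map (algebraMap (ZMod 2) F)).roots).card := Multiset.toFinset_card_le _
      _ ≤ (p.map (algebraMap (ZMod 2) F)).natDegree := card_roots' _
      _ = n := by rw [Polynomial.natDegree_map, hpdeg]
  -- T injects into the subtype
  have hTle : T.card ≤ Nat.card
      {p : Polynomial (ZMod 2) // p.Monic ∧ p.natDegree = n ∧ Irreducible p} := by
    have : ∀ p ∈ T, p.Monic ∧ p.natDegree = n ∧ Irreducible p := by
      intro p hp
      rcases Finset.mem_image.1 hp with ⟨β, hβ, hβp⟩
      rw [hG, mem_filter] at hβ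
      subst hβp
      exact ⟨minpoly.monic (hintegral β), hβ.2, minpoly.irreducible (hintegral β)⟩
    have hinj : Function.Injective
        (fun x : {x // x ∈ T} =>
          (⟨x.1, this x.1 x.2⟩ :
            {p : Polynomial (ZMod 2) // p.Monic ∧ p.natDegree = n ∧ Irreducible p})) := by
      rintro ⟨a, ha⟩ ⟨b, hb⟩ h
      simpa using h
    calc T.card = Nat.card {x // x ∈ T} := by
          rw [Nat.card_eq_fintype_card, Fintype.card_coe]
      _ ≤ _ := Nat.card_le_card_of_injective _ hinj
  -- combine
  have hmain : 2 ^ (n - 1) ≤ n * Nat.card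
      {p : Polynomial (ZMod 2) // p.Monic ∧ p.natDegree = n ∧ Irreducible p} :=
    hGcard.trans (hGT.trans (Nat.mul_le_mul_left n hTle))
  rw [div_le_iff₀ (by exact_mod_cast hn)]
  calc (2:ℝ) ^ (n - 1) = ((2 ^ (n - 1) : ℕ) : ℝ) := by push_cast; ring
    _ ≤ ((n * Nat.card {p : Polynomial (ZMod 2) //
          p.Monic ∧ p.natDegree = n ∧ Irreducible p} : ℕ) : ℝ) := by exact_mod_cast hmain
    _ = _ := by push_cast; ring
end

section
/- For the guessing probability of a classical random variable X given quantum side information B, P_guess(X|B) = max over POVMs {E_B^x} of Σ_x P_x Tr(E_B^x ρ_B^x) equals 2^(−H_min(X|B)), the exponential of minus the conditional min-entropy. -/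
open scoped ComplexOrder
open Finset Matrix

namespace KRSProof

variable {d : ℕ}

/-- real quadratic form of a complex matrix -/
noncomputable def q (B : Matrix (Fin d) (Fin d) ℂ) (z : Fin d → ℂ) : ℝ :=
  (star z ⬝ᵥ B *ᵥ z).re

noncomputable def nsq (z : Fin d → ℂ) : ℝ := ∑ i, Complex.normSq (z i)

lemma nsq_nonneg (z : Fin d → ℂ) : 0 ≤ nsq z :=
  Finset.sum_nonneg fun i _ => Complex.normSq_nonneg _

lemma q_add (B C : Matrix (Fin d) (Fin d) ℂ) (z : Fin d → ℂ) :
    q (B + C) z = q B z + q C z := by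
  simp [q, Matrix.add_mulVec, dotProduct_add]

lemma q_smul (r : ℝ) (B : Matrix (Fin d) (Fin d) ℂ) (z : Fin d → ℂ) :
    q (r • B) z = r * q B z := by
  simp only [q, Matrix.smul_mulVec, dotProduct_smul]
  rw [Complex.real_smul, Complex.re_ofReal_mul]

lemma q_sub (B C : Matrix (Fin d) (Fin d) ℂ) (z : Fin d → ℂ) :
    q (B - C) z = q B z - q C z := by
  have h := q_add (B - C) C z
  simp only [sub_add_cancel] at h
  linarith

lemma q_one (z : Fin d → ℂ) : q 1 z = nsq z := by
  simp only [q, Matrix.one_mulVec, dotProduct, nsq, Pi.star_apply, Complex.star_def,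
    Complex.re_sum]
  refine Finset.sum_congr rfl fun i _ => ?_
  simp [Complex.normSq_apply, Complex.mul_re]

lemma q_zero (z : Fin d → ℂ) : q 0 z = 0 := by
  simp [q]

/-- quadratic form is real on hermitian matrices -/
lemma herm_quad_im (B : Matrix (Fin d) (Fin d) ℂ) (hB : B.IsHermitian) (z : Fin d → ℂ) :
    (star z ⬝ᵥ B *ᵥ z).im = 0 := by
  have h1 : star z ⬝ᵥ B *ᵥ z = star (star z ⬝ᵥ B *ᵥ z) := by
    calc star z ⬝ᵥ B *ᵥ z = star z ᵥ* B ⬝ᵥ z := dotProduct_mulVec _ _ _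
      _ = star z ᵥ* Bᴴ ⬝ᵥ z := by rw [hB.eq]
      _ = star (B *ᵥ z) ⬝ᵥ z := by rw [Matrix.star_mulVec]
      _ = star (star z ⬝ᵥ (B *ᵥ z)) := by rw [star_dotProduct]
  exact Complex.conj_eq_iff_im.mp h1.symm

lemma herm_psd_iff (B : Matrix (Fin d) (Fin d) ℂ) (hB : B.IsHermitian) :
    B.PosSemidef ↔ ∀ z, 0 ≤ q B z := by
  constructor
  · intro h z; exact h.re_dotProduct_nonneg z
  · intro h
    refine Matrix.PosSemidef.of_dotProduct_mulVec_nonneg hB fun z => ?_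
    rw [Complex.le_def]
    refine ⟨by simpa [q] using h z, by simpa using (herm_quad_im B hB z).symm⟩

lemma psd_q_nonneg {B : Matrix (Fin d) (Fin d) ℂ} (hB : B.PosSemidef) (z : Fin d → ℂ) :
    0 ≤ q B z :=
  hB.re_dotProduct_nonneg z

lemma q_real_vec_smul (B : Matrix (Fin d) (Fin d) ℂ) (c : ℝ) (z : Fin d → ℂ) :
    q B ((c : ℂ) • z) = c ^ 2 * q B z := by
  simp only [q, Matrix.mulVec_smul, star_smul, smul_dotProduct, dotProduct_smul]
  simp only [star_trivial, RingHom.id_apply, Complex.star_def, Complex.conj_ofReal, smul_smul]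
  rw [smul_eq_mul, mul_assoc, Complex.re_ofReal_mul, Complex.re_ofReal_mul]
  ring

lemma nsq_real_smul (c : ℝ) (z : Fin d → ℂ) : nsq ((c : ℂ) • z) = c ^ 2 * nsq z := by
  simp [nsq, Complex.normSq_mul, Finset.mul_sum, Complex.normSq_ofReal, sq]


lemma herm_smul_real (r : ℝ) {B : Matrix (Fin d) (Fin d) ℂ} (hB : B.IsHermitian) :
    (r • B).IsHermitian := by
  apply Matrix.IsHermitian.ext
  intro i j
  simp [Matrix.smul_apply, star_smul, hB.apply]

lemma trace_re_nonneg {σ : Matrix (Fin d) (Fin d) ℂ} (h : σ.PosSemidef) :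
    0 ≤ σ.trace.re := by
  rw [Matrix.trace, Complex.re_sum]
  refine Finset.sum_nonneg fun j _ => ?_
  have := h.re_dotProduct_nonneg (Pi.single j 1)
  simpa [Matrix.diag, dotProduct, Matrix.mulVec, Pi.single_apply, Finset.sum_ite_eq',
    Finset.sum_ite_eq] using this

open scoped MatrixOrder in
/-- trace of product of two psd matrices has nonneg real part -/
lemma trace_mul_psd_re_nonneg {A B : Matrix (Fin d) (Fin d) ℂ}
    (hA : A.PosSemidef) (hB : B.PosSemidef) : 0 ≤ (A * B).trace.re := by
  obtain ⟨C, rfl⟩ : ∃ C : Matrix (Fin d) (Fin d) ℂ, B = Cᴴ * C :=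
    CStarAlgebra.nonneg_iff_eq_star_mul_self.mp hB.nonneg
  have h1 : A * (Cᴴ * C) = (A * Cᴴ) * C := by rw [Matrix.mul_assoc]
  rw [h1, Matrix.trace_mul_comm, ← Matrix.mul_assoc]
  exact trace_re_nonneg (hA.mul_mul_conjTranspose_same C)

lemma trace_conjTranspose_mul (D W : Matrix (Fin d) (Fin d) ℂ) :
    (Dᴴ * W).trace = ∑ j, ∑ i, (starRingEnd ℂ) (D i j) * W i j := by
  simp [Matrix.trace, Matrix.mul_apply, Matrix.diag, Matrix.conjTranspose_apply]

/-- quadratic form as trace against rank-one matrix -/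
lemma trace_mul_vecMulVec (G : Matrix (Fin d) (Fin d) ℂ) (z : Fin d → ℂ) :
    (G * vecMulVec z (star z)).trace = star z ⬝ᵥ G *ᵥ z := by
  simp only [Matrix.trace, Matrix.diag, Matrix.mul_apply, Matrix.vecMulVec_apply,
    dotProduct, Matrix.mulVec, Pi.star_apply]
  refine Finset.sum_congr rfl fun i _ => ?_
  rw [Finset.mul_sum]
  refine Finset.sum_congr rfl fun j _ => ?_
  ring

lemma vecMulVec_hermitian (z : Fin d → ℂ) : (vecMulVec z (star z)).IsHermitian := by
  apply Matrix.IsHermitian.ext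
  intro i j
  simp [Matrix.vecMulVec_apply, mul_comm]

lemma vecMulVec_posSemidef (z : Fin d → ℂ) : (vecMulVec z (star z)).PosSemidef := by
  have h : vecMulVec z (star z) = (Matrix.replicateRow Unit (star z))ᴴ * Matrix.replicateRow Unit (star z) := by
    ext i j
    simp [Matrix.mul_apply, Matrix.replicateRow_apply, Matrix.conjTranspose_apply,
      Matrix.vecMulVec_apply]
  rw [h]
  exact Matrix.posSemidef_conjTranspose_mul_self _

lemma vecMulVec_q_nonneg (z w : Fin d → ℂ) : 0 ≤ q (vecMulVec z (star z)) w :=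
  (vecMulVec_posSemidef z).re_dotProduct_nonneg w

open scoped MatrixOrder in
/-- quadratic form bounded by trace times norm -/
lemma q_le_trace_nsq {ρ : Matrix (Fin d) (Fin d) ℂ} (hρ : ρ.PosSemidef) (z : Fin d → ℂ) :
    q ρ z ≤ ρ.trace.re * nsq z := by
  obtain ⟨C, rfl⟩ : ∃ C : Matrix (Fin d) (Fin d) ℂ, ρ = Cᴴ * C :=
    CStarAlgebra.nonneg_iff_eq_star_mul_self.mp hρ.nonneg
  have hq : q (Cᴴ * C) z = ∑ i, Complex.normSq ((C *ᵥ z) i) := by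
    rw [q, ← Matrix.mulVec_mulVec, Matrix.dotProduct_mulVec (star z), ← Matrix.star_mulVec]
    simp only [dotProduct, Pi.star_apply, Complex.re_sum]
    refine Finset.sum_congr rfl fun i _ => ?_
    rw [Complex.star_def, ← Complex.normSq_eq_conj_mul_self]
    simp
  have htr : (Cᴴ * C).trace.re = ∑ i, ∑ j, Complex.normSq (C i j) := by
    rw [trace_conjTranspose_mul, Complex.re_sum, Finset.sum_comm]
    refine Finset.sum_congr rfl fun i _ => ?_
    rw [Complex.re_sum]
    refine Finset.sum_congr rfl fun j _ => ?_
    rw [← Complex.normSq_eq_conj_mul_self]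
    simp
  rw [hq, htr, Finset.sum_mul]
  refine Finset.sum_le_sum fun i _ => ?_
  have h1 : ‖(C *ᵥ z) i‖ ≤ ∑ j, ‖C i j‖ * ‖z j‖ := by
    have e : (C *ᵥ z) i = ∑ j, C i j * z j := by simp [Matrix.mulVec, dotProduct]
    rw [e]
    calc ‖∑ j, C i j * z j‖ ≤ ∑ j, ‖C i j * z j‖ :=
          norm_sum_le _ _
      _ = ∑ j, ‖C i j‖ * ‖z j‖ :=
          Finset.sum_congr rfl fun j _ => norm_mul _ _
  have h2 : (∑ j, ‖C i j‖ * ‖z j‖) ^ 2 ≤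
      (∑ j, ‖C i j‖ ^ 2) * (∑ j, ‖z j‖ ^ 2) :=
    Finset.sum_mul_sq_le_sq_mul_sq Finset.univ _ _
  have h3 : Complex.normSq ((C *ᵥ z) i) ≤
      (∑ j, ‖C i j‖ ^ 2) * (∑ j, ‖z j‖ ^ 2) := by
    rw [← Complex.sq_norm]
    refine le_trans ?_ h2
    have := norm_nonneg ((C *ᵥ z) i)
    nlinarith [Finset.sum_nonneg (fun j (_ : j ∈ Finset.univ) =>
      mul_nonneg (norm_nonneg (C i j)) (norm_nonneg (z j)))]
  refine h3.trans (le_of_eq ?_)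
  congr 1
  · exact Finset.sum_congr rfl fun j _ => Complex.sq_norm _
  · exact Finset.sum_congr rfl fun j _ => Complex.sq_norm _

def V (d : ℕ) : Set (Matrix (Fin d) (Fin d) ℂ) :=
  {B | ∀ z, nsq z = 1 → 0 < q B z}

lemma q_expand (C : Matrix (Fin d) (Fin d) ℂ) (z : Fin d → ℂ) :
    q C z = ∑ i, ∑ j, (star (z i) * C i j * z j).re := by
  simp only [q, dotProduct, Matrix.mulVec, Pi.star_apply, Complex.re_sum]
  refine Finset.sum_congr rfl fun i _ => ?_
  rw [Finset.mul_sum, Complex.re_sum]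
  refine Finset.sum_congr rfl fun j _ => ?_
  rw [mul_assoc]

lemma abs_le_one_of_mem_sphere {z : Fin d → ℂ} (hz : nsq z = 1) (i : Fin d) :
    ‖z i‖ ≤ 1 := by
  have h1 : Complex.normSq (z i) ≤ 1 := by
    rw [← hz]
    exact Finset.single_le_sum (fun j _ => Complex.normSq_nonneg (z j)) (Finset.mem_univ i)
  rw [← Complex.sq_norm] at h1
  nlinarith [norm_nonneg (z i)]

lemma q_abs_bound (C : Matrix (Fin d) (Fin d) ℂ) {z : Fin d → ℂ} (hz : nsq z = 1) :
    |q C z| ≤ ∑ i, ∑ j, ‖C i j‖ := by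
  rw [q_expand]
  refine (Finset.abs_sum_le_sum_abs _ _).trans ?_
  refine Finset.sum_le_sum fun i _ => ?_
  refine (Finset.abs_sum_le_sum_abs _ _).trans ?_
  refine Finset.sum_le_sum fun j _ => ?_
  refine (Complex.abs_re_le_norm _).trans ?_
  rw [norm_mul, norm_mul]
  have h1 := abs_le_one_of_mem_sphere hz i
  have h2 := abs_le_one_of_mem_sphere hz j
  have h3 := norm_nonneg (C i j)
  have h4 := norm_nonneg (z i)
  have h5 := norm_nonneg (z j)
  have : ‖star (z i)‖ = ‖z i‖ := by
    rw [Complex.star_def, Complex.norm_conj]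
  rw [this]
  have e1 : ‖z i‖ * ‖C i j‖ ≤ ‖C i j‖ := by nlinarith
  have e2 : 0 ≤ ‖z i‖ * ‖C i j‖ := mul_nonneg h4 h3
  nlinarith

lemma sphere_nonempty (hd : 0 < d) : ∃ z : Fin d → ℂ, nsq z = 1 := by
  refine ⟨Pi.single ⟨0, hd⟩ 1, ?_⟩
  simp [nsq, Pi.single_apply, apply_ite]

lemma continuous_nsq : Continuous (nsq (d := d)) :=
  continuous_finset_sum _ fun i _ => Complex.continuous_normSq.comp (continuous_apply i)

lemma continuous_q_right (B : Matrix (Fin d) (Fin d) ℂ) :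
    Continuous fun z => q B z := by
  have : (fun z => q B z) = fun z => ∑ i, ∑ j, (star (z i) * B i j * z j).re := by
    funext z; exact q_expand B z
  rw [this]
  refine continuous_finset_sum _ fun i _ => continuous_finset_sum _ fun j _ => ?_
  exact Complex.continuous_re.comp
    (((Complex.continuous_conj.comp (continuous_apply i)).mul continuous_const).mul
      (continuous_apply j))

lemma isOpen_V (hd : 0 < d) : IsOpen (V d) := by
  rw [isOpen_iff_mem_nhds]
  intro B₀ hB₀
  -- compact sphere
  set K : Set (Fin d → ℂ) := {z | nsq z = 1} with hK
  have hKclosed : IsClosed K := isClosed_eq continuous_nsq continuous_const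
  have hKsub : K ⊆ Metric.closedBall 0 1 := by
    intro z hz
    rw [Metric.mem_closedBall, dist_zero_right]
    rw [pi_norm_le_iff_of_nonneg zero_le_one]
    intro i
    exact abs_le_one_of_mem_sphere hz i
  have hKcompact : IsCompact K :=
    (isCompact_closedBall 0 1).of_isClosed_subset hKclosed hKsub
  have hKne : K.Nonempty := sphere_nonempty hd
  obtain ⟨z₀, hz₀K, hmin⟩ := hKcompact.exists_isMinOn hKne (continuous_q_right B₀).continuousOn
  set m := q B₀ z₀ with hm
  have hmpos : 0 < m := hB₀ z₀ hz₀K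
  set ε := m / (d * d + 1) with hε
  have hεpos : 0 < ε := by positivity
  set U : Set (Matrix (Fin d) (Fin d) ℂ) := ⋂ i, ⋂ j, {B | ‖B i j - B₀ i j‖ < ε}
    with hU
  have hUopen : IsOpen U := by
    refine isOpen_iInter_of_finite fun i => isOpen_iInter_of_finite fun j => ?_
    have : {B : Matrix (Fin d) (Fin d) ℂ | ‖B i j - B₀ i j‖ < ε} =
        (fun B : Matrix (Fin d) (Fin d) ℂ => B i j) ⁻¹' Metric.ball (B₀ i j) ε := by
      ext B; simp [Metric.mem_ball, Complex.dist_eq]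
    rw [this]
    exact (continuous_id.matrix_elem i j).isOpen_preimage _ Metric.isOpen_ball
  have hB₀U : B₀ ∈ U := by
    simp only [hU, Set.mem_iInter, Set.mem_setOf_eq]
    intro i j; simpa using hεpos
  refine Filter.mem_of_superset (hUopen.mem_nhds hB₀U) ?_
  intro B hBU z hz
  have hsplit : q B z = q B₀ z + q (B - B₀) z := by
    rw [← q_add]; norm_num
  have hbound : |q (B - B₀) z| ≤ ∑ i : Fin d, ∑ j : Fin d, ‖(B - B₀) i j‖ :=
    q_abs_bound _ hz
  have hsum : ∑ i : Fin d, ∑ j : Fin d, ‖(B - B₀) i j‖ ≤ (d * d) * ε := by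
    calc ∑ i : Fin d, ∑ j : Fin d, ‖(B - B₀) i j‖
        ≤ ∑ _i : Fin d, ∑ _j : Fin d, ε := by
          refine Finset.sum_le_sum fun i _ => Finset.sum_le_sum fun j _ => ?_
          simp only [hU, Set.mem_iInter, Set.mem_setOf_eq] at hBU
          exact le_of_lt (by simpa [Matrix.sub_apply] using hBU i j)
      _ = (d * d) * ε := by simp [Finset.sum_const, mul_assoc]
  have hmz : m ≤ q B₀ z := hmin hz
  have hlt : (d * d : ℝ) * ε < m := by
    rw [hε]
    have hdd : (0:ℝ) < (d:ℝ) * d + 1 := by positivity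
    rw [← mul_div_assoc, div_lt_iff₀ hdd]
    nlinarith
  rw [hsplit]
  have := abs_le.mp (hbound.trans hsum)
  linarith [this.1]

/-! ### Helper real analysis lemmas -/

lemma cvx_lt {a b x₁ x₂ y₁ y₂ : ℝ} (ha : 0 ≤ a) (hb : 0 ≤ b) (hab : a + b = 1)
    (h1 : x₁ < y₁) (h2 : x₂ < y₂) : a * x₁ + b * x₂ < a * y₁ + b * y₂ := by
  rcases ha.eq_or_lt with h | h
  · have hb1 : b = 1 := by linarith
    rw [← h, hb1]; simpa using h2
  · have e1 : a * x₁ < a * y₁ := mul_lt_mul_of_pos_left h1 h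
    have e2 : b * x₂ ≤ b * y₂ := mul_le_mul_of_nonneg_left h2.le hb
    linarith

lemma le_of_forall_gt_lin {c K L g : ℝ} (h : ∀ t, c < t → t * g + L < K) :
    c * g + L ≤ K := by
  by_contra hlt
  push_neg at hlt
  set D := c * g + L - K with hD
  have hDpos : 0 < D := by simp [hD]; linarith
  set δ := D / (2 * (|g| + 1)) with hδdef
  have habs : 0 ≤ |g| := abs_nonneg g
  have hδpos : 0 < δ := by positivity
  have hcle := h (c + δ) (by linarith)
  have hkey : δ * (|g| + 1) = D / 2 := by
    rw [hδdef]; field_simp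
  have hgb : -(D / 2) ≤ δ * g := by
    have h1 : -(|g|) ≤ g := neg_abs_le g
    nlinarith
  nlinarith [hcle]

lemma eq_zero_of_forall_smul_le {c C : ℝ} (h : ∀ s : ℝ, s * c ≤ C) : c = 0 := by
  by_contra hc
  have h1 := h ((C + 1) / c)
  rw [div_mul_cancel₀ _ hc] at h1
  linarith

lemma nonneg_of_forall_neg_smul_le {F C : ℝ} (h : ∀ s : ℝ, 0 < s → -(s * F) ≤ C) :
    0 ≤ F := by
  by_contra hF
  push_neg at hF
  have hC : 0 ≤ C := by
    have := h 1 one_pos; nlinarith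
  have hs : (0:ℝ) < (C + 1) / (-F) := div_pos (by linarith) (by linarith)
  have h1 := h _ hs
  have h2 : (C + 1) / (-F) * F = -(C + 1) := by
    rw [div_mul_eq_mul_div, div_eq_iff (by linarith : -F ≠ 0)]
    ring
  rw [h2] at h1
  linarith

lemma ge_of_forall_eps {S K c : ℝ} (hc : c < 0) (h : ∀ ε : ℝ, 0 < ε → K + ε * c ≤ S) :
    K ≤ S := by
  by_contra hlt
  push_neg at hlt
  set ε := (K - S) / (-2 * c) with hε
  have hεpos : 0 < ε := by
    apply div_pos (by linarith) (by linarith)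
  have h1 := h ε hεpos
  have h2 : ε * c = -(K - S) / 2 := by
    rw [hε]
    have hc' : c ≠ 0 := hc.ne
    field_simp
  rw [h2] at h1
  linarith

/-! ### the convex open set for separation -/

variable {k : ℕ}

def AA (A : Fin k → Matrix (Fin d) (Fin d) ℂ) :
    Set (ℝ × (Fin k → Matrix (Fin d) (Fin d) ℂ)) :=
  {p | ∃ σ : Matrix (Fin d) (Fin d) ℂ, σ.IsHermitian ∧ σ.trace.re < p.1 ∧
    ∀ x, σ - A x - p.2 x ∈ V d}

lemma isOpen_AA (hd : 0 < d) (A : Fin k → Matrix (Fin d) (Fin d) ℂ) : IsOpen (AA A) := by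
  have hrw : AA A = ⋃ σ : Matrix (Fin d) (Fin d) ℂ, ⋃ _ : σ.IsHermitian,
      (Set.Ioi σ.trace.re) ×ˢ {Y : Fin k → Matrix (Fin d) (Fin d) ℂ |
        ∀ x, σ - A x - Y x ∈ V d} := by
    ext p
    simp only [AA, Set.mem_setOf_eq, Set.mem_iUnion, Set.mem_prod, Set.mem_Ioi]
    tauto
  rw [hrw]
  refine isOpen_iUnion fun σ => isOpen_iUnion fun hσ => IsOpen.prod isOpen_Ioi ?_
  have hrw2 : {Y : Fin k → Matrix (Fin d) (Fin d) ℂ | ∀ x, σ - A x - Y x ∈ V d} =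
      ⋂ x, (fun Y : Fin k → Matrix (Fin d) (Fin d) ℂ => σ - A x - Y x) ⁻¹' V d := by
    ext Y; simp
  rw [hrw2]
  refine isOpen_iInter_of_finite fun x => ?_
  exact ((isOpen_V hd).preimage (continuous_const.sub (continuous_apply x)))

lemma convex_AA (A : Fin k → Matrix (Fin d) (Fin d) ℂ) : Convex ℝ (AA A) := by
  rintro p hp p' hp' a b ha hb hab
  obtain ⟨σ₁, hσ₁, ht₁, hf₁⟩ := hp
  obtain ⟨σ₂, hσ₂, ht₂, hf₂⟩ := hp'
  refine ⟨a • σ₁ + b • σ₂, (herm_smul_real a hσ₁).add (herm_smul_real b hσ₂), ?_, ?_⟩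
  · have h1 : (a • σ₁ + b • σ₂).trace.re = a * σ₁.trace.re + b * σ₂.trace.re := by
      rw [Matrix.trace_add, Matrix.trace_smul, Matrix.trace_smul, Complex.add_re,
        Complex.smul_re, Complex.smul_re]
      rfl
    have h2 : (a • p + b • p').1 = a * p.1 + b * p'.1 := by simp
    rw [h1, h2]
    exact cvx_lt ha hb hab ht₁ ht₂
  · intro x
    have key : (a • σ₁ + b • σ₂) - A x - (a • p + b • p').2 x =
        a • (σ₁ - A x - p.2 x) + b • (σ₂ - A x - p'.2 x) := by
      have hAx : A x = a • A x + b • A x := by rw [← add_smul, hab, one_smul]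
      simp only [Prod.snd_add, Prod.smul_snd, Pi.add_apply, Pi.smul_apply]
      rw [smul_sub, smul_sub, smul_sub, smul_sub]
      nth_rewrite 1 [hAx]
      abel
    intro z hz
    rw [key, q_add, q_smul, q_smul]
    have g1 := hf₁ x z hz
    have g2 := hf₂ x z hz
    have := cvx_lt ha hb hab g1 g2 (x₁ := 0) (x₂ := 0)
    simpa using this

lemma psd_of_mem_V {B : Matrix (Fin d) (Fin d) ℂ} (hB : B.IsHermitian) (h : B ∈ V d) :
    B.PosSemidef := by
  rw [herm_psd_iff B hB]
  intro z
  by_cases hz : z = 0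
  · subst hz; simp [q]
  · have hnsq : 0 < nsq z := by
      rcases Function.ne_iff.mp hz with ⟨i, hi⟩
      have h1 : 0 < Complex.normSq (z i) := by
        simpa [Complex.normSq_pos] using hi
      have h2 : Complex.normSq (z i) ≤ nsq z :=
        Finset.single_le_sum (fun j _ => Complex.normSq_nonneg (z j)) (Finset.mem_univ i)
      linarith
    set n := Real.sqrt (nsq z) with hn
    have hnpos : 0 < n := Real.sqrt_pos.mpr hnsq
    set z' := ((n⁻¹ : ℝ) : ℂ) • z with hz'
    have hnsq' : nsq z' = 1 := by
      rw [hz', nsq_real_smul, hn]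
      rw [inv_pow, Real.sq_sqrt hnsq.le]
      exact inv_mul_cancel₀ hnsq.ne'
    have hq' := h z' hnsq'
    have hzz : ((n : ℝ) : ℂ) • z' = z := by
      rw [hz', smul_smul, ← Complex.ofReal_mul, mul_inv_cancel₀ hnpos.ne', Complex.ofReal_one,
        one_smul]
    have : q B z = n ^ 2 * q B z' := by
      rw [← hzz, q_real_vec_smul]
    rw [this]
    positivity

/-! ### representation of the separating functional by matrices -/

lemma exists_rep (f : (ℝ × (Fin k → Matrix (Fin d) (Fin d) ℂ)) →L[ℝ] ℝ) (x : Fin k) :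
    ∃ D : Matrix (Fin d) (Fin d) ℂ,
      ∀ W : Matrix (Fin d) (Fin d) ℂ, ((Dᴴ * W).trace).re = f (0, Pi.single x W) := by
  classical
  set g : Matrix (Fin d) (Fin d) ℂ →ₗ[ℝ] ℝ :=
    { toFun := fun W => f (0, Pi.single x W)
      map_add' := fun W W' => by
        have h : ((0, Pi.single x (W + W')) : ℝ × (Fin k → Matrix (Fin d) (Fin d) ℂ)) =
            (0, Pi.single x W) + (0, Pi.single x W') := by
          simp [Prod.ext_iff, Pi.single_add]
        show f _ = f _ + f _
        rw [h, map_add]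
      map_smul' := fun r W => by
        have h : ((0, Pi.single x (r • W)) : ℝ × (Fin k → Matrix (Fin d) (Fin d) ℂ)) =
            r • (0, Pi.single x W) := by
          simp [Prod.ext_iff, Pi.single_smul]
        show f _ = _
        rw [h, f.map_smul]
        rfl } with hg
  refine ⟨Matrix.of fun i j =>
    ((g (Matrix.single i j 1) : ℝ) : ℂ) + (g (Matrix.single i j Complex.I) : ℝ) * Complex.I,
    fun W => ?_⟩
  show _ = g W
  rw [trace_conjTranspose_mul]
  simp only [Complex.re_sum]
  rw [Finset.sum_comm]
  conv_rhs => rw [matrix_eq_sum_single W, map_sum]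
  refine Finset.sum_congr rfl fun i _ => ?_
  rw [map_sum]
  refine Finset.sum_congr rfl fun j _ => ?_
  set u := g (Matrix.single i j 1) with hu
  set v := g (Matrix.single i j Complex.I) with hv
  have hsplit : Matrix.single i j (W i j) =
      (W i j).re • Matrix.single i j (1:ℂ) + (W i j).im • Matrix.single i j Complex.I := by
    rw [Matrix.smul_single, Matrix.smul_single, ← Matrix.single_add]
    congr 1
    simp [Complex.real_smul]
  rw [hsplit, map_add, _root_.map_smul, _root_.map_smul]
  have hD : (Matrix.of fun i j =>
      ((g (Matrix.single i j 1) : ℝ) : ℂ) + (g (Matrix.single i j Complex.I) : ℝ) * Complex.I)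
      i j = (u : ℂ) + (v : ℝ) * Complex.I := rfl
  rw [hD]
  have hconj : (starRingEnd ℂ) ((u : ℂ) + (v : ℝ) * Complex.I) = (u : ℂ) - (v : ℝ) * Complex.I := by
    apply Complex.ext <;> simp
  rw [hconj]
  simp only [smul_eq_mul]
  rw [sub_mul, Complex.sub_re]
  rw [Complex.re_ofReal_mul]
  have : ((v : ℝ) * Complex.I * W i j).re = v * (Complex.I * W i j).re := by
    rw [mul_assoc, Complex.re_ofReal_mul]
  rw [this]
  rw [Complex.I_mul_re]
  ring

lemma herm_G (β : ℝ) (D : Matrix (Fin d) (Fin d) ℂ) :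
    ((((β / 2 : ℝ) : ℂ) • (D + Dᴴ)) : Matrix (Fin d) (Fin d) ℂ).IsHermitian := by
  rw [Matrix.IsHermitian, Matrix.conjTranspose_smul, Matrix.conjTranspose_add,
    Matrix.conjTranspose_conjTranspose, Complex.star_def, Complex.conj_ofReal, add_comm Dᴴ D]

lemma herm_pairing (β : ℝ) (D : Matrix (Fin d) (Fin d) ℂ) {W : Matrix (Fin d) (Fin d) ℂ}
    (hW : W.IsHermitian) :
    (((((β / 2 : ℝ) : ℂ) • (D + Dᴴ)) * W).trace).re = β * ((Dᴴ * W).trace).re := by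
  have h1 : (Dᴴ * W).trace = star ((D * W).trace) := by
    rw [← Matrix.trace_conjTranspose, Matrix.conjTranspose_mul, hW.eq, Matrix.trace_mul_comm]
  have h2 : (D * W).trace.re = (Dᴴ * W).trace.re := by
    rw [h1]; simp
  rw [Matrix.smul_mul, Matrix.trace_smul, add_mul, Matrix.trace_add, smul_eq_mul,
    Complex.re_ofReal_mul, Complex.add_re]
  linear_combination (β / 2) * h2

end KRSProof

open KRSProof

/-- operational meaning of the conditional min-entropy (König–Renner–Schaffner).
For a classical random variable `X` (values in `Fin k`, distribution `P`) with quantum side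
information `B` (states `ρ x` on a `d`-dimensional system), the optimal guessing probability
`P_guess(X|B) = max_{POVM} Σ_x P_x Tr(E_x ρ_x)` equals `2^(−H_min(X|B))`, where the
conditional min-entropy of the cq state is characterized by its SDP form
`2^(−H_min(X|B)) = min { Tr σ : σ ⪰ P_x ρ_x for all x }`. -/
theorem guessing_prob_eq_exp_neg_min_entropy
    (d k : ℕ) (hd : 0 < d) (hk : 0 < k)
    (P : Fin k → ℝ) (hP0 : ∀ x, 0 ≤ P x) (hP1 : ∑ x, P x = 1)
    (ρ : Fin k → Matrix (Fin d) (Fin d) ℂ)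
    (hρ : ∀ x, (ρ x).PosSemidef) (hρtr : ∀ x, (ρ x).trace = 1)
    (Hmin : ℝ)
    (hHmin : (2 : ℝ) ^ (-Hmin) =
      sInf {t : ℝ | ∃ σ : Matrix (Fin d) (Fin d) ℂ, σ.PosSemidef ∧
        (∀ x, (σ - (P x : ℂ) • ρ x).PosSemidef) ∧ t = σ.trace.re}) :
    IsGreatest {r : ℝ | ∃ E : Fin k → Matrix (Fin d) (Fin d) ℂ,
        (∀ x, (E x).PosSemidef) ∧ (∑ x, E x = 1) ∧
        r = ∑ x, P x * ((E x * ρ x).trace.re)}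
      ((2 : ℝ) ^ (-Hmin)) := by
  classical
  rw [hHmin]
  set A : Fin k → Matrix (Fin d) (Fin d) ℂ := fun x => (P x : ℂ) • ρ x with hA
  set T : Set ℝ := {t : ℝ | ∃ σ : Matrix (Fin d) (Fin d) ℂ, σ.PosSemidef ∧
        (∀ x, (σ - A x).PosSemidef) ∧ t = σ.trace.re} with hT
  set α := sInf T with hα
  -- basic facts about A
  have hAsmul : ∀ x, A x = (P x) • (ρ x) := by
    intro x; ext i j
    simp [hA, Complex.real_smul]
  have hAherm : ∀ x, (A x).IsHermitian := by
    intro x; rw [hAsmul x]; exact herm_smul_real _ (hρ x).1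
  have hqA : ∀ x z, q (A x) z = P x * q (ρ x) z := by
    intro x z; rw [hAsmul x, q_smul]
  have hApsd : ∀ x, (A x).PosSemidef := by
    intro x
    rw [herm_psd_iff _ (hAherm x)]
    intro z
    rw [hqA]
    exact mul_nonneg (hP0 x) (psd_q_nonneg (hρ x) z)
  have hPle1 : ∀ x, P x ≤ 1 := by
    intro x
    rw [← hP1]
    exact Finset.single_le_sum (fun j _ => hP0 j) (Finset.mem_univ x)
  have hqρ_le : ∀ x z, q (ρ x) z ≤ nsq z := by
    intro x z
    have := q_le_trace_nsq (hρ x) z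
    rw [hρtr x] at this
    simpa using this
  have hqA_le : ∀ x z, q (A x) z ≤ nsq z := by
    intro x z
    rw [hqA]
    have h1 := hqρ_le x z
    have h2 := psd_q_nonneg (hρ x) z
    have h3 := hP0 x
    have h4 := hPle1 x
    nlinarith
  -- feasibility of scaled identity
  have hbase : ∀ s : ℝ, 2 ≤ s → ∀ x, (s • (1 : Matrix (Fin d) (Fin d) ℂ) - A x) ∈ V d := by
    intro s hs x z hz
    rw [q_sub, q_smul, q_one, hz]
    have := hqA_le x z
    rw [hz] at this
    linarith
  have htr_smul_one : ∀ s : ℝ,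
      ((s • (1 : Matrix (Fin d) (Fin d) ℂ)).trace).re = s * d := by
    intro s
    rw [Matrix.trace_smul, Matrix.trace_one, Complex.smul_re]
    simp
  -- T nonempty and bounded below
  have hTne : T.Nonempty := by
    refine ⟨(d : ℝ), 1, Matrix.PosSemidef.one, fun x => ?_, by simp⟩
    rw [herm_psd_iff _ (Matrix.isHermitian_one.sub (hAherm x))]
    intro z
    rw [q_sub, q_one]
    have := hqA_le x z
    linarith
  have hTbdd : BddBelow T := by
    refine ⟨0, fun t ht => ?_⟩
    obtain ⟨σ, hσ, _, rfl⟩ := ht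
    exact trace_re_nonneg hσ
  -- weak duality
  have hweak : ∀ E : Fin k → Matrix (Fin d) (Fin d) ℂ, (∀ x, (E x).PosSemidef) →
      (∑ x, E x = 1) → ∀ t ∈ T, (∑ x, ((E x * A x).trace).re) ≤ t := by
    intro E hE hEsum t ht
    obtain ⟨σ, hσ, hfeas, rfl⟩ := ht
    have h1 : ∀ x, ((E x * A x).trace).re ≤ ((E x * σ).trace).re := by
      intro x
      have h2 : (E x * σ).trace - (E x * A x).trace = (E x * (σ - A x)).trace := by
        rw [Matrix.mul_sub, Matrix.trace_sub]
      have h3 := trace_mul_psd_re_nonneg (hE x) (hfeas x)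
      have h4 : ((E x * σ).trace - (E x * A x).trace).re = ((E x * (σ - A x)).trace).re := by
        rw [h2]
      rw [Complex.sub_re] at h4
      linarith
    calc (∑ x, ((E x * A x).trace).re) ≤ ∑ x, ((E x * σ).trace).re :=
          Finset.sum_le_sum fun x _ => h1 x
      _ = σ.trace.re := by
          rw [← Complex.re_sum, ← Matrix.trace_sum, ← Finset.sum_mul, hEsum, Matrix.one_mul]
  -- value bridging
  have hval : ∀ E : Fin k → Matrix (Fin d) (Fin d) ℂ,
      (∑ x, P x * ((E x * ρ x).trace).re) = ∑ x, ((E x * A x).trace).re := by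
    intro E
    refine Finset.sum_congr rfl fun x _ => ?_
    rw [hA]
    show P x * ((E x * ρ x).trace).re = ((E x * ((P x : ℂ) • ρ x)).trace).re
    rw [Matrix.mul_smul, Matrix.trace_smul, smul_eq_mul, Complex.re_ofReal_mul]
  -- upper bound part of IsGreatest
  have hub : ∀ r ∈ {r : ℝ | ∃ E : Fin k → Matrix (Fin d) (Fin d) ℂ,
      (∀ x, (E x).PosSemidef) ∧ (∑ x, E x = 1) ∧
      r = ∑ x, P x * ((E x * ρ x).trace.re)}, r ≤ α := by
    rintro r ⟨E, hE, hEsum, rfl⟩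
    rw [hval E]
    exact le_csInf hTne (hweak E hE hEsum)
  -- separation
  have hnotmem : ((α, 0) : ℝ × (Fin k → Matrix (Fin d) (Fin d) ℂ)) ∉ AA A := by
    rintro ⟨σ, hσherm, hσtr, hσfeas⟩
    have hpsd : ∀ x, (σ - A x).PosSemidef := by
      intro x
      refine psd_of_mem_V (hσherm.sub (hAherm x)) ?_
      simpa using hσfeas x
    have hσpsd : σ.PosSemidef := by
      have h0 : σ = (σ - A ⟨0, hk⟩) + A ⟨0, hk⟩ := (sub_add_cancel σ (A ⟨0, hk⟩)).symm
      rw [h0]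
      exact (hpsd _).add (hApsd _)
    have : α ≤ σ.trace.re := csInf_le hTbdd ⟨σ, hσpsd, hpsd, rfl⟩
    simp only at hσtr
    linarith
  obtain ⟨f, hf⟩ := geometric_hahn_banach_open_point (convex_AA A) (isOpen_AA hd A) hnotmem
  set γ := f (1, 0) with hγdef
  set L : (Fin k → Matrix (Fin d) (Fin d) ℂ) → ℝ := fun Y => f (0, Y) with hLdef
  have hlin : ∀ (t : ℝ) Y, f (t, Y) = t * γ + L Y := by
    intro t Y
    have h1 : ((t, Y) : ℝ × (Fin k → Matrix (Fin d) (Fin d) ℂ)) =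
        t • (1, 0) + (0, Y) := by
      simp [Prod.ext_iff]
    rw [h1, map_add, f.map_smul, smul_eq_mul]
  have hL0 : L 0 = 0 := by
    have h0 : ((0, 0) : ℝ × (Fin k → Matrix (Fin d) (Fin d) ℂ)) = 0 := rfl
    simp only [hLdef, h0, map_zero]
  have hLadd : ∀ Y Y', L (Y + Y') = L Y + L Y' := by
    intro Y Y'
    have h1 : ((0, Y + Y') : ℝ × (Fin k → Matrix (Fin d) (Fin d) ℂ)) = (0, Y) + (0, Y') := by
      simp [Prod.ext_iff]
    simp only [hLdef]; rw [h1, map_add]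
  have hLsmul : ∀ (r : ℝ) Y, L (r • Y) = r * L Y := by
    intro r Y
    have h1 : ((0, r • Y) : ℝ × (Fin k → Matrix (Fin d) (Fin d) ℂ)) = r • (0, Y) := by
      simp [Prod.ext_iff]
    simp only [hLdef]; rw [h1, f.map_smul, smul_eq_mul]
  have hαpt : f (α, 0) = α * γ := by rw [hlin, hL0, add_zero]
  have hsep : ∀ σ : Matrix (Fin d) (Fin d) ℂ, σ.IsHermitian →
      ∀ Y, (∀ x, σ - A x - Y x ∈ V d) → σ.trace.re * γ + L Y ≤ α * γ := by
    intro σ hσ Y hY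
    refine le_of_forall_gt_lin fun t ht => ?_
    have hmem : ((t, Y) : ℝ × (Fin k → Matrix (Fin d) (Fin d) ℂ)) ∈ AA A := ⟨σ, hσ, ht, hY⟩
    have := hf _ hmem
    rwa [hlin, hαpt] at this
  have h2dherm : ((2:ℝ) • (1 : Matrix (Fin d) (Fin d) ℂ)).IsHermitian :=
    herm_smul_real 2 Matrix.isHermitian_one
  have h2d : (2 * d) * γ ≤ α * γ := by
    have := hsep ((2:ℝ) • 1) h2dherm 0 (fun x => by simpa using hbase 2 le_rfl x)
    rw [htr_smul_one, hL0, add_zero] at this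
    linarith
  have hγneg : γ < 0 := by
    rcases lt_trichotomy γ 0 with h | h | h
    · exact h
    · exfalso
      have hmem : ((2*d+1, 0) : ℝ × (Fin k → Matrix (Fin d) (Fin d) ℂ)) ∈ AA A :=
        ⟨(2:ℝ) • 1, h2dherm, by rw [htr_smul_one]; norm_num,
          fun x => by simpa using hbase 2 le_rfl x⟩
      have h2 := hf _ hmem
      rw [hlin, hαpt, hL0, add_zero, h, mul_zero, mul_zero] at h2
      exact lt_irrefl _ h2
    · exfalso
      have hdpos : (0:ℝ) < d := by exact_mod_cast hd
      set s₀ := max 2 ((α * γ + 1) / ((d:ℝ) * γ)) with hs₀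
      have hs₀2 : (2:ℝ) ≤ s₀ := le_max_left _ _
      have h1 := hsep (s₀ • 1) (herm_smul_real _ Matrix.isHermitian_one) 0
        (fun x => by simpa using hbase s₀ hs₀2 x)
      rw [htr_smul_one, hL0, add_zero] at h1
      have hdγ : 0 < (d:ℝ) * γ := mul_pos hdpos h
      have h3 : α * γ + 1 ≤ s₀ * ((d:ℝ) * γ) := (div_le_iff₀ hdγ).mp (le_max_right _ _)
      nlinarith
  set β := -γ⁻¹ with hβ
  have hβpos : 0 < β := by
    rw [hβ, neg_pos]
    exact inv_lt_zero.mpr hγneg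
  have hβγ : β * (-γ) = 1 := by
    rw [hβ]
    field_simp
    exact div_self hγneg.ne
  choose D hD using fun x => exists_rep f x
  set G : Fin k → Matrix (Fin d) (Fin d) ℂ :=
    fun x => ((β/2 : ℝ) : ℂ) • (D x + (D x)ᴴ) with hG
  have hGherm : ∀ x, (G x).IsHermitian := fun x => herm_G β (D x)
  have hGpair : ∀ x (W : Matrix (Fin d) (Fin d) ℂ), W.IsHermitian →
      ((G x * W).trace).re = β * L (Pi.single x W) := by
    intro x W hW
    have h1 := herm_pairing β (D x) hW
    have h2 := hD x W
    rw [hG]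
    simp only []
    rw [h1, h2]
  have hLsumsingle : ∀ Y, L Y = ∑ x, L (Pi.single x (Y x)) := by
    intro Y
    have h1 : ((0, Y) : ℝ × (Fin k → Matrix (Fin d) (Fin d) ℂ)) =
        ∑ x, ((0 : ℝ), Pi.single x (Y x)) := by
      rw [Prod.ext_iff]
      constructor
      · rw [Prod.fst_sum]
        simp
      · rw [Prod.snd_sum]
        exact (Finset.univ_sum_single Y).symm
    simp only [hLdef]
    rw [h1, map_sum]
  have hLr1 : ∀ x (z : Fin d → ℂ), 0 ≤ L (Pi.single x (vecMulVec z (star z))) := by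
    intro x z
    set Z := vecMulVec z (star z) with hZ
    refine nonneg_of_forall_neg_smul_le (C := α * γ - (2*d) * γ) fun s hs => ?_
    have hfeas : ∀ x', (2:ℝ) • 1 - A x' -
        (Pi.single x (-(s • Z)) : Fin k → Matrix (Fin d) (Fin d) ℂ) x' ∈ V d := by
      intro x'
      by_cases hxx : x' = x
      · subst hxx
        intro w hw
        have h1 : (2:ℝ) • (1:Matrix (Fin d) (Fin d) ℂ) - A x' -
            (Pi.single x' (-(s • Z)) : Fin k → Matrix (Fin d) (Fin d) ℂ) x' =
            ((2:ℝ) • 1 - A x') + s • Z := by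
          rw [Pi.single_eq_same, sub_neg_eq_add]
        rw [h1, q_add, q_smul]
        have h2 := hbase 2 le_rfl x' w hw
        have h3 := vecMulVec_q_nonneg z w
        nlinarith
      · rw [Pi.single_eq_of_ne hxx]
        simpa using hbase 2 le_rfl x'
    have hstep := hsep ((2:ℝ) • 1) h2dherm _ hfeas
    rw [htr_smul_one] at hstep
    have hsingle : (Pi.single x (-(s • Z)) : Fin k → Matrix (Fin d) (Fin d) ℂ) =
        (-s) • (Pi.single x Z : Fin k → Matrix (Fin d) (Fin d) ℂ) := by
      rw [← Pi.single_smul]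
      congr 1
      rw [neg_smul]
    rw [hsingle, hLsmul] at hstep
    linarith
  have hGpsd : ∀ x, (G x).PosSemidef := by
    intro x
    rw [herm_psd_iff _ (hGherm x)]
    intro z
    have h1 : q (G x) z = ((G x * vecMulVec z (star z)).trace).re := by
      rw [q, trace_mul_vecMulVec]
    rw [h1, hGpair x _ (vecMulVec_hermitian z)]
    exact mul_nonneg hβpos.le (hLr1 x z)
  have hsum_single : ∀ H : Matrix (Fin d) (Fin d) ℂ, H.IsHermitian →
      (∑ x, L (Pi.single x H)) = -γ * H.trace.re := by
    intro H hH
    have hkey : ∀ s : ℝ,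
        s * (H.trace.re * γ + ∑ x, L (Pi.single x H)) ≤ α * γ - (2*d) * γ := by
      intro s
      have hσherm : ((2:ℝ) • (1:Matrix (Fin d) (Fin d) ℂ) + s • H).IsHermitian :=
        h2dherm.add (herm_smul_real s hH)
      have hfeas : ∀ x, (2:ℝ) • (1:Matrix (Fin d) (Fin d) ℂ) + s • H - A x -
          (fun _ : Fin k => s • H) x ∈ V d := by
        intro x
        have h1 : (2:ℝ) • (1:Matrix (Fin d) (Fin d) ℂ) + s • H - A x -
            (fun _ : Fin k => s • H) x = (2:ℝ) • 1 - A x := by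
          show (2:ℝ) • (1:Matrix (Fin d) (Fin d) ℂ) + s • H - A x - s • H = _
          abel
        rw [h1]
        exact hbase 2 le_rfl x
      have hstep := hsep _ hσherm (fun _ => s • H) hfeas
      have htr2 : (((2:ℝ) • (1:Matrix (Fin d) (Fin d) ℂ) + s • H).trace).re =
          2*d + s * H.trace.re := by
        rw [Matrix.trace_add, Complex.add_re, htr_smul_one 2, Matrix.trace_smul,
          Complex.smul_re, smul_eq_mul]
      rw [htr2] at hstep
      have hLY : L (fun _ : Fin k => s • H) = s * ∑ x, L (Pi.single x H) := by
        rw [hLsumsingle]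
        rw [Finset.mul_sum]
        refine Finset.sum_congr rfl fun x _ => ?_
        rw [Pi.single_smul, hLsmul]
      rw [hLY] at hstep
      ring_nf at hstep ⊢
      linarith
    have h0 := eq_zero_of_forall_smul_le hkey
    linarith
  have hGsum : (∑ x, G x) = 1 := by
    set Q : Matrix (Fin d) (Fin d) ℂ := (∑ x, G x) - 1 with hQ
    have hQherm : Q.IsHermitian := by
      have h1 : (∑ x, G x).IsHermitian := by
        rw [Matrix.IsHermitian, Matrix.conjTranspose_sum]
        exact Finset.sum_congr rfl fun x _ => (hGherm x).eq
      exact h1.sub Matrix.isHermitian_one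
    have hQtr : ∀ H : Matrix (Fin d) (Fin d) ℂ, H.IsHermitian → ((Q * H).trace).re = 0 := by
      intro H hH
      rw [hQ, Matrix.sub_mul, Matrix.trace_sub, Complex.sub_re, Matrix.one_mul]
      have h1 : (((∑ x, G x) * H).trace).re = ∑ x, ((G x * H).trace).re := by
        rw [Finset.sum_mul, Matrix.trace_sum, Complex.re_sum]
      rw [h1]
      have h2 : ∑ x, ((G x * H).trace).re = β * ∑ x, L (Pi.single x H) := by
        rw [Finset.mul_sum]
        exact Finset.sum_congr rfl fun x _ => hGpair x H hH
      rw [h2, hsum_single H hH]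
      have : β * (-γ * H.trace.re) = (β * (-γ)) * H.trace.re := by ring
      rw [this, hβγ, one_mul, sub_self]
    have hQQ := hQtr Q hQherm
    have hQQ2 : (Qᴴ * Q).trace.re = 0 := by
      rw [hQherm.eq]
      exact hQQ
    have hnorms : ∑ j, ∑ i, Complex.normSq (Q i j) = 0 := by
      rw [trace_conjTranspose_mul, Complex.re_sum] at hQQ2
      rw [← hQQ2]
      refine Finset.sum_congr rfl fun j _ => ?_
      rw [Complex.re_sum]
      refine Finset.sum_congr rfl fun i _ => ?_
      rw [← Complex.normSq_eq_conj_mul_self]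
      simp
    have hQ0 : Q = 0 := by
      ext i j
      have h1 : ∀ j' ∈ Finset.univ, (0:ℝ) ≤ ∑ i', Complex.normSq (Q i' j') :=
        fun j' _ => Finset.sum_nonneg fun i' _ => Complex.normSq_nonneg _
      have h2 := (Finset.sum_eq_zero_iff_of_nonneg h1).mp hnorms j (Finset.mem_univ j)
      have h3 := (Finset.sum_eq_zero_iff_of_nonneg
        (fun i' _ => Complex.normSq_nonneg (Q i' j))).mp h2 i (Finset.mem_univ i)
      simpa [Complex.normSq_eq_zero] using h3
    have := sub_eq_zero.mp hQ0
    exact this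
  -- the value of the POVM G
  have hAx_herm_L : (∑ x, L (Pi.single x (A x))) ≥ -(α * γ) := by
    have hγd : (γ * d) < 0 := by
      have hdpos : (0:ℝ) < d := by exact_mod_cast hd
      exact mul_neg_of_neg_of_pos hγneg hdpos
    refine ge_of_forall_eps hγd fun ε hε => ?_
    have hfeas : ∀ x, (0 : Matrix (Fin d) (Fin d) ℂ) - A x -
        (fun x' => -(A x') - ε • 1) x ∈ V d := by
      intro x
      have h1 : (0 : Matrix (Fin d) (Fin d) ℂ) - A x - (-(A x) - ε • 1) = ε • 1 := by abel
      show ((0 : Matrix (Fin d) (Fin d) ℂ) - A x - (-(A x) - ε • 1)) ∈ V d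
      rw [h1]
      intro z hz
      rw [q_smul, q_one, hz]
      simpa using hε
    have hstep := hsep 0 Matrix.isHermitian_zero _ hfeas
    rw [Matrix.trace_zero] at hstep
    simp only [Complex.zero_re, zero_mul, zero_add] at hstep
    have hLY : L (fun x' => -(A x') - ε • 1) =
        -(∑ x, L (Pi.single x (A x))) - ε * (-γ * d) := by
      rw [hLsumsingle]
      have h1 : ∀ x, L (Pi.single x (-(A x) - ε • (1:Matrix (Fin d) (Fin d) ℂ))) =
          -(L (Pi.single x (A x))) - ε * L (Pi.single x 1) := by
        intro x
        have e1 : (Pi.single x (-(A x) - ε • (1:Matrix (Fin d) (Fin d) ℂ)) :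
              Fin k → Matrix (Fin d) (Fin d) ℂ) =
            (-1 : ℝ) • (Pi.single x (A x) : Fin k → Matrix (Fin d) (Fin d) ℂ) +
            (-ε : ℝ) • (Pi.single x 1 : Fin k → Matrix (Fin d) (Fin d) ℂ) := by
          rw [← Pi.single_smul, ← Pi.single_smul, ← Pi.single_add]
          congr 1
          rw [neg_one_smul, neg_smul]
          abel
        rw [e1, hLadd, hLsmul, hLsmul]
        ring
      rw [Finset.sum_congr rfl fun x _ => h1 x]
      rw [Finset.sum_sub_distrib, Finset.sum_neg_distrib, ← Finset.mul_sum]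
      rw [hsum_single 1 Matrix.isHermitian_one, Matrix.trace_one]
      simp
    rw [hLY] at hstep
    ring_nf at hstep ⊢
    linarith
  set S0 := ∑ x, L (Pi.single x (A x)) with hS0
  have hvalG : (∑ x, ((G x * A x).trace).re) = β * S0 := by
    rw [hS0, Finset.mul_sum]
    exact Finset.sum_congr rfl fun x _ => hGpair x (A x) (hAherm x)
  have hvalGα : α ≤ ∑ x, ((G x * A x).trace).re := by
    rw [hvalG]
    have h1 : β * (-(α * γ)) ≤ β * S0 :=
      mul_le_mul_of_nonneg_left hAx_herm_L hβpos.le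
    have h2 : β * (-(α * γ)) = α := by
      calc β * (-(α * γ)) = α * (β * (-γ)) := by ring
        _ = α := by rw [hβγ, mul_one]
    linarith
  have hle : (∑ x, P x * ((G x * ρ x).trace.re)) ≤ α :=
    hub _ ⟨G, hGpsd, hGsum, rfl⟩
  have heq : (∑ x, P x * ((G x * ρ x).trace.re)) = α := by
    refine le_antisymm hle ?_
    rw [hval G]
    exact hvalGα
  exact ⟨⟨G, hGpsd, hGsum, heq.symm⟩, hub⟩
end
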